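/- In the group G = ⟨a, b, t | t⁻¹at = b, t⁻¹bt = aba⁻¹⟩, setting x = a t⁻¹, the element x satisfies the relation t⁻²xt³ · x · t⁻¹ x⁻² = 1 (i.e., G has the one-relator presentation ⟨x, t | t⁻²xt³ x t⁻¹ x⁻²⟩). -/

import Mathlib

/-- Generators: `0 = a`, `1 = b`, `2 = t`.  Relations of
`⟨a, b, t | t⁻¹at = b, t⁻¹bt = aba⁻¹⟩`. -/
def grels : Set (FreeGroup (Fin 3)) :=
  {(FreeGroup.of 2)⁻¹ * FreeGroup.of 0 * FreeGroup.of 2 * (FreeGroup.of 1)⁻¹,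
   (FreeGroup.of 2)⁻¹ * FreeGroup.of 1 * FreeGroup.of 2 *
     (FreeGroup.of 0 * FreeGroup.of 1 * (FreeGroup.of 0)⁻¹)⁻¹}

lemma grels_one {r : FreeGroup (Fin 3)} (hr : r ∈ grels) :
    PresentedGroup.mk grels r = 1 := by
  have : r ∈ Subgroup.normalClosure grels := Subgroup.subset_normalClosure hr
  exact (QuotientGroup.eq_one_iff r).mpr this

theorem stmt_6 :
    ∀ x t : PresentedGroup grels,
      t = PresentedGroup.of 2 →
      x = PresentedGroup.of 0 * t⁻¹ →
      t⁻¹ ^ 2 * x * t ^ 3 * x * t⁻¹ * x⁻¹ ^ 2 = 1 := by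
  intro x t ht hx
  set a : PresentedGroup grels := PresentedGroup.of 0 with ha
  set b : PresentedGroup grels := PresentedGroup.of 1 with hb
  have h1 : t⁻¹ * a * t * b⁻¹ = 1 := by
    rw [ht, ha, hb]
    have := grels_one (r := (FreeGroup.of 2)⁻¹ * FreeGroup.of 0 * FreeGroup.of 2 *
      (FreeGroup.of 1)⁻¹) (Or.inl rfl)
    simpa [PresentedGroup.of] using this
  have h2 : t⁻¹ * b * t * (a * b * a⁻¹)⁻¹ = 1 := by
    rw [ht, ha, hb]
    have := grels_one (r := (FreeGroup.of 2)⁻¹ * FreeGroup.of 1 * FreeGroup.of 2 *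
      (FreeGroup.of 0 * FreeGroup.of 1 * (FreeGroup.of 0)⁻¹)⁻¹) (Or.inr rfl)
    simpa [PresentedGroup.of] using this
  have e1 : t⁻¹ * a * t = b := by
    have := mul_eq_one_iff_eq_inv.mp h1
    simpa using this
  have e2 : t⁻¹ * b * t = a * b * a⁻¹ := by
    have := mul_eq_one_iff_eq_inv.mp h2
    simpa using this
  have e3 : t⁻¹ * a⁻¹ * t = b⁻¹ := by
    have : (t⁻¹ * a * t)⁻¹ = b⁻¹ := by rw [e1]
    simpa [mul_assoc] using this
  rw [hx]
  -- goal: t⁻²(a t⁻¹)t³(a t⁻¹)t⁻¹(a t⁻¹)⁻² = 1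
  have key : t⁻¹ ^ 2 * (a * t⁻¹) * t ^ 3 * (a * t⁻¹) * t⁻¹ * ((a * t⁻¹)⁻¹) ^ 2
      = (t⁻¹ * (t⁻¹ * a * t) * t) * (a * (t⁻¹ * a⁻¹ * t) * a⁻¹) := by
    simp only [pow_two, mul_inv_rev]
    group
    simp [zpow_two, mul_assoc]
    rw [pow_two, mul_assoc]
  rw [key, e1, e3, e2]
  group
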